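/- Let 0 ≤ h ∈ L¹(a,b) with h ≢ 0 and let v ∈ C¹([a,b]) be the solution of −(φ(v'))' = h in (a,b), v(a) = v(b) = 0. Then v ∈ P°, that is, v > 0 on (a,b) and v'(b) < 0 < v'(a). -/

import Mathlib

open MeasureTheory Set Filter

/-- `φ` is an odd increasing homeomorphism of `ℝ`. -/
def OddIncHomeo (φ : ℝ → ℝ) : Prop :=
  StrictMono φ ∧ Continuous φ ∧ Function.Surjective φ ∧ ∀ x, φ (-x) = -φ x

/-- `v` is `C¹` on `[a,b]` with derivative `v'`. -/
def C1On (v v' : ℝ → ℝ) (a b : ℝ) : Prop :=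
  ContinuousOn v (Icc a b) ∧ ContinuousOn v' (Icc a b) ∧
  ∀ x ∈ Icc a b, HasDerivWithinAt v (v' x) (Icc a b) x

/-- `v` (with derivative `v'`) is a solution of `-(φ(v'))' = h` in `(a,b)`,
`v(a) = v(b) = 0`. -/
def IsSolutionH (φ h : ℝ → ℝ) (a b : ℝ) (v v' : ℝ → ℝ) : Prop :=
  C1On v v' a b ∧ v a = 0 ∧ v b = 0 ∧
  ∀ x ∈ Icc a b, φ (v' x) = φ (v' a) - ∫ s in a..x, h s


lemma pos_int_left (f : ℝ → ℝ) (a b : ℝ) (hab : a < b)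
    (hc : ContinuousOn f (Icc a b)) (hnn : ∀ t ∈ Icc a b, 0 ≤ f t)
    (hfa : 0 < f a) : 0 < ∫ t in a..b, f t := by
  have hint : ∀ x y, a ≤ x → x ≤ y → y ≤ b → IntervalIntegrable f volume x y := by
    intro x y hx hxy hyb
    apply ContinuousOn.intervalIntegrable
    apply hc.mono
    rw [uIcc_of_le hxy]
    exact Icc_subset_Icc hx hyb
  obtain ⟨δ, hδ, hδ'⟩ := Metric.continuousWithinAt_iff.mp (hc a (left_mem_Icc.mpr hab.le)) (f a / 2) (by linarith)
  set c := min b (a + δ/2) with hc_def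
  have hac : a < c := lt_min hab (by linarith)
  have hcb : c ≤ b := min_le_left _ _
  have hfc : ∀ t ∈ Icc a c, f a / 2 ≤ f t := by
    intro t ht
    have ht' : t ∈ Icc a b := ⟨ht.1, ht.2.trans hcb⟩
    have : dist t a < δ := by
      rw [Real.dist_eq, abs_of_nonneg (by linarith [ht.1])]
      have : t ≤ a + δ/2 := ht.2.trans (min_le_right _ _)
      linarith
    have := hδ' ht' this
    rw [Real.dist_eq] at this
    have := abs_lt.mp this
    linarith [this.1]
  have h1 : (c - a) * (f a / 2) ≤ ∫ t in a..c, f t := by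
    calc (c - a) * (f a / 2) = ∫ _ in a..c, f a / 2 := by
          rw [intervalIntegral.integral_const, smul_eq_mul]
      _ ≤ ∫ t in a..c, f t := by
          apply intervalIntegral.integral_mono_on hac.le
            (intervalIntegrable_const) (hint a c le_rfl hac.le hcb)
          exact hfc
  have h2 : 0 ≤ ∫ t in c..b, f t := by
    apply intervalIntegral.integral_nonneg hcb
    intro t ht
    exact hnn t ⟨hac.le.trans ht.1, ht.2⟩
  have h3 : (∫ t in a..c, f t) + ∫ t in c..b, f t = ∫ t in a..b, f t :=
    intervalIntegral.integral_add_adjacent_intervals (hint a c le_rfl hac.le hcb) (hint c b hac.le hcb le_rfl)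
  nlinarith [h1, h2, h3, hac]

lemma pos_int_right (f : ℝ → ℝ) (a b : ℝ) (hab : a < b)
    (hc : ContinuousOn f (Icc a b)) (hnn : ∀ t ∈ Icc a b, 0 ≤ f t)
    (hfb : 0 < f b) : 0 < ∫ t in a..b, f t := by
  have hint : ∀ x y, a ≤ x → x ≤ y → y ≤ b → IntervalIntegrable f volume x y := by
    intro x y hx hxy hyb
    apply ContinuousOn.intervalIntegrable
    apply hc.mono
    rw [uIcc_of_le hxy]
    exact Icc_subset_Icc hx hyb
  obtain ⟨δ, hδ, hδ'⟩ := Metric.continuousWithinAt_iff.mp (hc b (right_mem_Icc.mpr hab.le)) (f b / 2) (by linarith)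
  set c := max a (b - δ/2) with hc_def
  have hcb : c < b := max_lt hab (by linarith)
  have hac : a ≤ c := le_max_left _ _
  have hfc : ∀ t ∈ Icc c b, f b / 2 ≤ f t := by
    intro t ht
    have ht' : t ∈ Icc a b := ⟨hac.trans ht.1, ht.2⟩
    have : dist t b < δ := by
      rw [Real.dist_eq, abs_of_nonpos (by linarith [ht.2])]
      have : b - δ/2 ≤ t := (le_max_right _ _).trans ht.1
      linarith
    have := hδ' ht' this
    rw [Real.dist_eq] at this
    have := abs_lt.mp this
    linarith [this.1]
  have h1 : (b - c) * (f b / 2) ≤ ∫ t in c..b, f t := by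
    calc (b - c) * (f b / 2) = ∫ _ in c..b, f b / 2 := by
          rw [intervalIntegral.integral_const, smul_eq_mul]
      _ ≤ ∫ t in c..b, f t := by
          apply intervalIntegral.integral_mono_on hcb.le
            (intervalIntegrable_const) (hint c b hac hcb.le le_rfl)
          exact hfc
  have h2 : 0 ≤ ∫ t in a..c, f t := by
    apply intervalIntegral.integral_nonneg hac
    intro t ht
    exact hnn t ⟨ht.1, ht.2.trans hcb.le⟩
  have h3 : (∫ t in a..c, f t) + ∫ t in c..b, f t = ∫ t in a..b, f t :=
    intervalIntegral.integral_add_adjacent_intervals (hint a c le_rfl hac hcb.le) (hint c b hac hcb.le le_rfl)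
  nlinarith [h1, h2, h3, hcb]

theorem solution_in_Pint
    (a b : ℝ) (hab : a < b) (φ : ℝ → ℝ) (hφ : OddIncHomeo φ)
    (h : ℝ → ℝ) (hh : IntegrableOn h (Icc a b))
    (hh0 : ∀ᵐ x ∂(volume : Measure ℝ), x ∈ Ioo a b → 0 ≤ h x)
    (hhne : ¬ (∀ᵐ x ∂(volume : Measure ℝ), x ∈ Ioo a b → h x = 0))
    (v v' : ℝ → ℝ) (hv : IsSolutionH φ h a b v v') :
    (∀ x ∈ Ioo a b, 0 < v x) ∧ v' b < 0 ∧ 0 < v' a := by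
  obtain ⟨⟨hvc, hv'c, hvd⟩, hva, hvb, heq⟩ := hv
  have hφm := hφ.1
  -- integrability of h on subintervals
  have hhint : ∀ x y, a ≤ x → x ≤ y → y ≤ b → IntervalIntegrable h volume x y := by
    intro x y hx hxy hyb
    apply IntegrableOn.intervalIntegrable
    rw [uIcc_of_le hxy]
    exact hh.mono_set (Icc_subset_Icc hx hyb)
  -- a.e. nonneg on Ioc a b
  have hbne : ∀ᵐ t : ℝ, t ≠ b := by
    have : (volume : Measure ℝ) {b} = 0 := Real.volume_singleton
    filter_upwards [measure_eq_zero_iff_ae_notMem.mp this] with t ht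
    simpa using ht
  have hh0' : ∀ᵐ t : ℝ, t ∈ Ioc a b → 0 ≤ h t := by
    filter_upwards [hh0, hbne] with t h1 h2 ht
    exact h1 ⟨ht.1, lt_of_le_of_ne ht.2 h2⟩
  have hane : ∀ᵐ t : ℝ, t ≠ a := by
    have : (volume : Measure ℝ) {a} = 0 := Real.volume_singleton
    filter_upwards [measure_eq_zero_iff_ae_notMem.mp this] with t ht
    simpa using ht
  -- nonnegativity of ∫ over subintervals
  have hintnn : ∀ x y, a ≤ x → x ≤ y → y ≤ b → 0 ≤ ∫ s in x..y, h s := by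
    intro x y hx hxy hyb
    apply intervalIntegral.integral_nonneg_of_ae_restrict hxy
    rw [Filter.EventuallyLE, ae_restrict_iff' measurableSet_Icc]
    filter_upwards [hh0', hane] with t ht hta h2
    simpa using ht ⟨lt_of_le_of_ne (hx.trans h2.1) (Ne.symm hta), h2.2.trans hyb⟩
  -- antitonicity of v'
  have hant : ∀ x ∈ Icc a b, ∀ y ∈ Icc a b, x ≤ y → v' y ≤ v' x := by
    intro x hx y hy hxy
    rw [← hφm.le_iff_le, heq x hx, heq y hy]
    have hadd : (∫ s in a..x, h s) + ∫ s in x..y, h s = ∫ s in a..y, h s :=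
      intervalIntegral.integral_add_adjacent_intervals
        (hhint a x le_rfl hx.1 hx.2) (hhint x y hx.1 hxy hy.2)
    have := hintnn x y hx.1 hxy hy.2
    linarith
  -- ∫ h over (a,b) is positive
  have hIpos : 0 < ∫ s in a..b, h s := by
    rcases lt_or_eq_of_le (hintnn a b le_rfl hab.le le_rfl) with h' | h'
    · exact h'
    exfalso
    apply hhne
    have hInt : IntegrableOn h (Ioc a b) := hh.mono_set Ioc_subset_Icc_self
    have hnn : 0 ≤ᵐ[volume.restrict (Ioc a b)] h := by
      rw [Filter.EventuallyLE, ae_restrict_iff' measurableSet_Ioc]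
      filter_upwards [hh0'] with t ht h2
      simpa using ht h2
    have := (MeasureTheory.integral_eq_zero_iff_of_nonneg_ae hnn hInt).mp ?_
    · rw [Filter.EventuallyEq, ae_restrict_iff' measurableSet_Ioc] at this
      filter_upwards [this] with t ht h2
      simpa using ht ⟨h2.1, h2.2.le⟩
    · rw [← intervalIntegral.integral_of_le hab.le]
      exact h'.symm
  -- v' b < v' a
  have hba : v' b < v' a := by
    rw [← hφm.lt_iff_lt, heq b ⟨hab.le, le_rfl⟩, heq a ⟨le_rfl, hab.le⟩]
    rw [intervalIntegral.integral_same]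
    linarith
  -- FTC
  have hFTC : ∀ x y, a ≤ x → x ≤ y → y ≤ b → ∫ t in x..y, v' t = v y - v x := by
    intro x y hx hxy hyb
    rcases eq_or_lt_of_le hxy with rfl | hxy'
    · simp
    apply intervalIntegral.integral_eq_sub_of_hasDeriv_right_of_le hxy
    · exact hvc.mono (Icc_subset_Icc hx hyb)
    · intro t ht
      have ht' : t ∈ Ioo a b := ⟨hx.trans_lt ht.1, ht.2.trans_le hyb⟩
      exact (hvd t ⟨ht'.1.le, ht'.2.le⟩).mono_of_mem_nhdsWithin
        (mem_nhdsWithin_of_mem_nhds (Icc_mem_nhds ht'.1 ht'.2))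
    · apply ContinuousOn.intervalIntegrable
      rw [uIcc_of_le hxy]
      exact hv'c.mono (Icc_subset_Icc hx hyb)
  have hint0 : ∫ t in a..b, v' t = 0 := by
    rw [hFTC a b le_rfl hab.le le_rfl, hva, hvb]; ring
  -- v' a > 0
  have hv'a : 0 < v' a := by
    by_contra hcon
    push_neg at hcon
    have : 0 < ∫ t in a..b, (fun t => -v' t) t := by
      apply pos_int_right _ a b hab (hv'c.neg)
      · intro t ht
        simp only [Pi.neg_apply, neg_nonneg]
        exact (hant a ⟨le_rfl, hab.le⟩ t ht ht.1).trans hcon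
      · exact neg_pos.mpr (hba.trans_le hcon)
    rw [intervalIntegral.integral_neg, hint0, neg_zero] at this
    exact lt_irrefl 0 this
  -- v' b < 0
  have hv'b : v' b < 0 := by
    by_contra hcon
    push_neg at hcon
    have : 0 < ∫ t in a..b, v' t := by
      apply pos_int_left _ a b hab hv'c
      · intro t ht
        exact hcon.trans (hant t ht b ⟨hab.le, le_rfl⟩ ht.2)
      · linarith
    rw [hint0] at this
    exact lt_irrefl 0 this
  refine ⟨?_, hv'b, hv'a⟩
  intro x hx
  rcases lt_or_ge (v' x) 0 with hvx | hvx
  · -- v x > v b = 0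
    have h1 : ∫ t in x..b, v' t ≤ (b - x) * v' x := by
      calc ∫ t in x..b, v' t ≤ ∫ _ in x..b, v' x := by
            apply intervalIntegral.integral_mono_on hx.2.le
              (by apply ContinuousOn.intervalIntegrable
                  rw [uIcc_of_le hx.2.le]
                  exact hv'c.mono (Icc_subset_Icc hx.1.le le_rfl)) intervalIntegrable_const
            intro t ht
            exact hant x ⟨hx.1.le, hx.2.le⟩ t ⟨hx.1.le.trans ht.1, ht.2⟩ ht.1
        _ = (b - x) * v' x := by rw [intervalIntegral.integral_const, smul_eq_mul]
    rw [hFTC x b hx.1.le hx.2.le le_rfl, hvb] at h1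
    nlinarith [hx.2]
  · -- v x = ∫_a^x v' > 0
    have : 0 < ∫ t in a..x, v' t := by
      apply pos_int_left _ a x hx.1 (hv'c.mono (Icc_subset_Icc le_rfl hx.2.le))
      · intro t ht
        exact hvx.trans (hant t ⟨ht.1, ht.2.trans hx.2.le⟩ x ⟨hx.1.le, hx.2.le⟩ ht.2)
      · exact hv'a
    rwa [hFTC a x le_rfl hx.1.le hx.2.le, hva, sub_zero] at this
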